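/- (Summing the bosonic recursion over windings.) For 1 ≤ a ≤ b ≤ N and a winding assignment w giving a vector in Λ to every bead of particles a,…,b, let E_w^{[a,b]} = c·∑_{ℓ=a}^{b} ∑_{j=1}^{P} ∑_{i=1}^d (r_ℓ^j + w_ℓ^j·L − r_ℓ^{j+1})_i², where r_ℓ^{P+1} = r_{ℓ+1}^1 except r_b^{P+1} = r_a^1 (the specific-winding cycle energy), and let exp(−βE^{[a,b]}) = ∑_{w} exp(−βE_w^{[a,b]}) (the winding-summed cycle energy). Define recursively F_0 = 1 and, for 1 ≤ v ≤ N and w a winding assignment on the beads of particles 1,…,v, F_v(w) = (1/v)·∑_{k=1}^{v} F_{v−k}(w restricted to particles 1,…,v−k)·exp(−βE_w^{[v−k+1,v]}); and define G_0 = 1, G_v = (1/v)·∑_{k=1}^{v} G_{v−k}·exp(−βE^{[v−k+1,v]}). Then for every 0 ≤ v ≤ N, ∑_{w} F_v(w) = G_v, where the sum runs over all winding assignments on the beads of particles 1,…,v. -/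

import Mathlib

open Finset Real

noncomputable section

/-- Winding window: integer vectors `w : Fin d → ℤ` with `-W ≤ w i ≤ W` in every coordinate. -/
def windowSet (d W : ℕ) : Finset (Fin d → ℤ) :=
  Fintype.piFinset fun _ => Finset.Icc (-(W : ℤ)) (W : ℤ)

/-- Winding assignments giving a vector of `Λ` to every bead of particles `a, …, b`
(particles are labeled `1, …, N` inside `Fin (N+1)`); all other beads carry the zero
winding, so that this `Finset` is in canonical bijection with the assignments on the
beads of particles `a, …, b`. -/
def Wset (N P d W : ℕ) (a b : ℕ) : Finset (Fin (N + 1) → Fin P → Fin d → ℤ) :=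
  Fintype.piFinset fun ℓ =>
    if a ≤ ℓ.val ∧ ℓ.val ≤ b then Fintype.piFinset fun _ => windowSet d W
    else {fun _ _ => 0}

/-- Restriction of a winding assignment to the beads of particles `1, …, v`. -/
def restrictW (N P d : ℕ) (v : ℕ) (w : Fin (N + 1) → Fin P → Fin d → ℤ) :
    Fin (N + 1) → Fin P → Fin d → ℤ :=
  fun ℓ => if 1 ≤ ℓ.val ∧ ℓ.val ≤ v then w ℓ else fun _ _ => 0

open Fin.NatCast in
/-- Position of the bead following bead `j` of particle `ℓ` in the single ring polymer
through particles `a, …, b`: the next bead of the same particle, or the first bead of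
particle `ℓ+1`, with the cycle closed from the last bead of `b` to the first bead of `a`. -/
def nxtPos (N P d : ℕ) [NeZero P] (r : Fin (N + 1) → Fin P → Fin d → ℝ)
    (a b ℓ : ℕ) (j : Fin P) : Fin d → ℝ :=
  if h : j.val + 1 < P then r ℓ ⟨j.val + 1, h⟩
  else if ℓ = b then r a 0 else r (ℓ + 1 : ℕ) 0

open Fin.NatCast in
/-- Specific-winding cycle energy `E_w^{[a,b]}` of the ring polymer through particles
`a, …, b`. -/
def Ew (N P d : ℕ) [NeZero P] (c L : ℝ) (r : Fin (N + 1) → Fin P → Fin d → ℝ)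
    (a b : ℕ) (w : Fin (N + 1) → Fin P → Fin d → ℤ) : ℝ :=
  c * ∑ ℓ ∈ Finset.Icc a b, ∑ j : Fin P, ∑ i : Fin d,
    (r ℓ j i + (w ℓ j i : ℝ) * L - nxtPos N P d r a b ℓ j i) ^ 2

/-- Winding-summed cycle energy: `exp(-βE^{[a,b]}) = ∑_w exp(-βE_w^{[a,b]})`. -/
def EwSum (N P d W : ℕ) [NeZero P] (β c L : ℝ) (r : Fin (N + 1) → Fin P → Fin d → ℝ)
    (a b : ℕ) : ℝ :=
  ∑ w ∈ Wset N P d W a b, Real.exp (-(β * Ew N P d c L r a b w))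

lemma Wset_zero {N P d W : ℕ} {a b : ℕ} {w : Fin (N + 1) → Fin P → Fin d → ℤ}
    (hw : w ∈ Wset N P d W a b) {ℓ : Fin (N + 1)} (h : ¬(a ≤ ℓ.val ∧ ℓ.val ≤ b)) :
    w ℓ = fun _ _ => 0 := by
  rw [Wset, Fintype.mem_piFinset] at hw
  have := hw ℓ
  rwa [if_neg h, Finset.mem_singleton] at this

lemma Wset_mem_window {N P d W : ℕ} {a b : ℕ} {w : Fin (N + 1) → Fin P → Fin d → ℤ}
    (hw : w ∈ Wset N P d W a b) {ℓ : Fin (N + 1)} (h : a ≤ ℓ.val ∧ ℓ.val ≤ b) :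
    w ℓ ∈ Fintype.piFinset fun _ : Fin P => windowSet d W := by
  rw [Wset, Fintype.mem_piFinset] at hw
  have := hw ℓ
  rwa [if_pos h] at this

lemma recomb {N P d W : ℕ} {m v : ℕ}
    {w : Fin (N + 1) → Fin P → Fin d → ℤ} (hw : w ∈ Wset N P d W 1 v) :
    restrictW N P d m w +
      (fun ℓ => if m + 1 ≤ ℓ.val ∧ ℓ.val ≤ v then w ℓ else fun _ _ => 0) = w := by
  funext ℓ j i
  simp only [Pi.add_apply, restrictW]
  by_cases h1 : 1 ≤ ℓ.val ∧ ℓ.val ≤ m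
  · rw [if_pos h1, if_neg (by omega)]; simp
  · rw [if_neg h1]
    by_cases h2 : m + 1 ≤ ℓ.val ∧ ℓ.val ≤ v
    · rw [if_pos h2]; simp
    · rw [if_neg h2]
      have hz : w ℓ = fun _ _ => 0 := Wset_zero hw (by omega)
      simp [hz]

lemma restrict_add {N P d W : ℕ} {m v : ℕ}
    {w1 w2 : Fin (N + 1) → Fin P → Fin d → ℤ}
    (h1 : w1 ∈ Wset N P d W 1 m) (h2 : w2 ∈ Wset N P d W (m + 1) v) :
    restrictW N P d m (w1 + w2) = w1 := by
  funext ℓ j i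
  simp only [restrictW, Pi.add_apply]
  by_cases h : 1 ≤ ℓ.val ∧ ℓ.val ≤ m
  · rw [if_pos h]
    have hz : w2 ℓ = fun _ _ => 0 := Wset_zero h2 (by omega)
    simp [hz]
  · rw [if_neg h]
    have hz : w1 ℓ = fun _ _ => 0 := Wset_zero h1 (by omega)
    simp [hz]

lemma split_sum (N P d W : ℕ) (m v : ℕ) (hm : m ≤ v) (hv : v ≤ N)
    (f : (Fin (N + 1) → Fin P → Fin d → ℤ) → ℝ) :
    ∑ w ∈ Wset N P d W 1 v, f w
      = ∑ w1 ∈ Wset N P d W 1 m, ∑ w2 ∈ Wset N P d W (m + 1) v, f (w1 + w2) := by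
  rw [← Finset.sum_product']
  refine Finset.sum_nbij'
    (i := fun w => (restrictW N P d m w,
      fun ℓ => if m + 1 ≤ ℓ.val ∧ ℓ.val ≤ v then w ℓ else fun _ _ => 0))
    (j := fun p => p.1 + p.2) ?_ ?_ ?_ ?_ ?_
  · intro w hw
    rw [Finset.mem_product]
    constructor
    · rw [Wset, Fintype.mem_piFinset]
      intro ℓ
      by_cases h : 1 ≤ ℓ.val ∧ ℓ.val ≤ m
      · rw [if_pos h]
        simp only [restrictW, if_pos h]
        exact Wset_mem_window hw ⟨h.1, h.2.trans hm⟩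
      · rw [if_neg h, Finset.mem_singleton]
        simp only [restrictW, if_neg h]
    · rw [Wset, Fintype.mem_piFinset]
      intro ℓ
      by_cases h : m + 1 ≤ ℓ.val ∧ ℓ.val ≤ v
      · rw [if_pos h]
        simp only [if_pos h]
        exact Wset_mem_window hw ⟨le_trans (by omega) h.1, h.2⟩
      · rw [if_neg h, Finset.mem_singleton]
        simp only [if_neg h]
  · intro p hp
    rw [Finset.mem_product] at hp
    rw [Wset, Fintype.mem_piFinset]
    intro ℓ
    by_cases h : 1 ≤ ℓ.val ∧ ℓ.val ≤ v
    · rw [if_pos h]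
      by_cases h2 : ℓ.val ≤ m
      · have hz : p.2 ℓ = fun _ _ => 0 := Wset_zero hp.2 (by omega)
        have : (p.1 + p.2) ℓ = p.1 ℓ := by
          funext j i; simp [hz]
        show (p.1 + p.2) ℓ ∈ _
        rw [this]
        exact Wset_mem_window hp.1 ⟨h.1, h2⟩
      · have hz : p.1 ℓ = fun _ _ => 0 := Wset_zero hp.1 (by omega)
        have : (p.1 + p.2) ℓ = p.2 ℓ := by
          funext j i; simp [hz]
        show (p.1 + p.2) ℓ ∈ _
        rw [this]
        exact Wset_mem_window hp.2 ⟨by omega, h.2⟩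
    · rw [if_neg h, Finset.mem_singleton]
      have h1 : p.1 ℓ = fun _ _ => 0 := Wset_zero hp.1 (by omega)
      have h2 : p.2 ℓ = fun _ _ => 0 := Wset_zero hp.2 (by omega)
      funext j i; simp [h1, h2]
  · intro w hw
    exact recomb hw
  · intro p hp
    rw [Finset.mem_product] at hp
    have e1 : restrictW N P d m (p.1 + p.2) = p.1 := restrict_add hp.1 hp.2
    have e2 : (fun ℓ => if m + 1 ≤ ℓ.val ∧ ℓ.val ≤ v then (p.1 + p.2) ℓ
        else fun (_ : Fin P) (_ : Fin d) => (0:ℤ)) = p.2 := by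
      funext ℓ j i
      by_cases h : m + 1 ≤ ℓ.val ∧ ℓ.val ≤ v
      · rw [if_pos h]
        have hz : p.1 ℓ = fun _ _ => 0 := Wset_zero hp.1 (by omega)
        simp [hz]
      · rw [if_neg h]
        have hz : p.2 ℓ = fun _ _ => 0 := Wset_zero hp.2 h
        simp [hz]
    exact Prod.ext e1 e2
  · intro w hw
    exact congrArg f (recomb hw).symm

open Fin.NatCast in
lemma Ew_add (N P d : ℕ) [NeZero P] (c L : ℝ) (r : Fin (N + 1) → Fin P → Fin d → ℝ)
    {W m v : ℕ} (hv : v ≤ N) {w1 w2 : Fin (N + 1) → Fin P → Fin d → ℤ}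
    (h1 : w1 ∈ Wset N P d W 1 m) :
    Ew N P d c L r (m + 1) v (w1 + w2) = Ew N P d c L r (m + 1) v w2 := by
  unfold Ew
  congr 1
  refine Finset.sum_congr rfl fun ℓ hℓ => ?_
  rw [Finset.mem_Icc] at hℓ
  have hcast : ((ℓ : ℕ) : Fin (N + 1)).val = ℓ := Fin.val_cast_of_lt (by omega)
  have hz : w1 (ℓ : Fin (N + 1)) = fun _ _ => 0 := Wset_zero h1 (by omega)
  refine Finset.sum_congr rfl fun j _ => Finset.sum_congr rfl fun i _ => ?_
  simp [hz]

/-- summing the bosonic recursion over windings. If `F` satisfies the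
specific-winding recursion and `G` the winding-summed recursion, then for every `v ≤ N`
the sum of `F v` over all winding assignments on the beads of particles `1, …, v`
equals `G v`. -/
theorem stmt8 (N P d W : ℕ) [NeZero P] (hN : 1 ≤ N) (hd : 0 < d)
    (β L c : ℝ) (hβ : 0 < β) (hL : 0 < L) (hc : 0 < c)
    (r : Fin (N + 1) → Fin P → Fin d → ℝ)
    (F : ℕ → (Fin (N + 1) → Fin P → Fin d → ℤ) → ℝ) (G : ℕ → ℝ)
    (hF0 : ∀ w, F 0 w = 1)
    (hF : ∀ v, 1 ≤ v → v ≤ N → ∀ w,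
      F v w = (1 / (v : ℝ)) * ∑ k ∈ Finset.Icc 1 v,
        F (v - k) (restrictW N P d (v - k) w) *
          Real.exp (-(β * Ew N P d c L r (v - k + 1) v w)))
    (hG0 : G 0 = 1)
    (hG : ∀ v, 1 ≤ v → v ≤ N → G v = (1 / (v : ℝ)) * ∑ k ∈ Finset.Icc 1 v,
      G (v - k) * EwSum N P d W β c L r (v - k + 1) v) :
    ∀ v ≤ N, ∑ w ∈ Wset N P d W 1 v, F v w = G v := by
  intro v
  induction v using Nat.strong_induction_on with
  | _ v ih =>
    intro hv
    rcases Nat.eq_zero_or_pos v with h0 | h1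
    · subst h0
      have hset : Wset N P d W 1 0 = {fun _ _ _ => 0} := by
        ext w
        rw [Wset, Fintype.mem_piFinset, Finset.mem_singleton]
        constructor
        · intro h
          funext ℓ
          have := h ℓ
          rwa [if_neg (by omega), Finset.mem_singleton] at this
        · intro h ℓ
          rw [if_neg (by omega), Finset.mem_singleton, h]
      rw [hset, Finset.sum_singleton, hF0, hG0]
    · rw [hG v h1 hv,
        Finset.sum_congr rfl (fun w _ => hF v h1 hv w), ← Finset.mul_sum,
        Finset.sum_comm]
      congr 1
      refine Finset.sum_congr rfl fun k hk => ?_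
      rw [Finset.mem_Icc] at hk
      have hm : v - k ≤ v := Nat.sub_le v k
      have hmlt : v - k < v := by omega
      rw [split_sum N P d W (v - k) v hm hv,
        Finset.sum_congr rfl (fun w1 hw1 => Finset.sum_congr rfl (fun w2 hw2 => by
          rw [restrict_add hw1 hw2, Ew_add N P d c L r hv hw1])),
        ← Finset.sum_mul_sum, ih (v - k) hmlt (le_trans hm hv)]
      rfl

end
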